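/- Let X_a be a random vector in ℝ^d with X_a and Y conditionally independent given X. Then for every θ ∈ ℝ^d, E[(Y − θᵀX_a)²] = E[(Y − θᵀE[X_a|X])²] + θᵀΓθ, where Γ = E[(X_a − E[X_a|X])(X_a − E[X_a|X])ᵀ] is the integrated conditional covariance matrix. -/

import Mathlib

open MeasureTheory ProbabilityTheory Matrix

section Aux

variable {Ω : Type*} {m : MeasurableSpace Ω} {mΩ : MeasurableSpace Ω} [StandardBorelSpace Ω]
  {μ : Measure Ω} [IsProbabilityMeasure μ]

lemma aux_integrable_mul {f g : Ω → ℝ} (hf : MemLp f 2 μ) (hg : MemLp g 2 μ) :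
    Integrable (fun ω => f ω * g ω) μ := by
  rw [← memLp_one_iff_integrable]
  have h := MemLp.smul (p := 2) (q := 2) (r := 1) hg hf
  exact h

lemma aux_memℒp_condexp (hm : m ≤ mΩ) {f : Ω → ℝ} (hfm : Measurable f)
    (hf : MemLp f 2 μ) : MemLp (μ[f|m]) 2 μ := by
  have hfi : Integrable f μ := hf.integrable one_le_two
  have hf2i : Integrable (fun ω => f ω ^ 2) μ := hf.integrable_sq
  have h1 := condExp_ae_eq_integral_condExpKernel hm hfi
  have h2 := condExp_ae_eq_integral_condExpKernel hm hf2i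
  have h3 := hfi.condExpKernel_ae (m := m)
  have h4 := hf2i.condExpKernel_ae (m := m)
  have hbound : ∀ᵐ ω ∂μ, ‖(μ[f|m]) ω ^ 2‖ ≤ (μ[fun ω' => f ω' ^ 2|m]) ω := by
    filter_upwards [h1, h2, h3, h4] with ω e1 e2 i3 i4
    rw [e1, e2]
    have hmem : MemLp f 2 (condExpKernel μ m ω) :=
      (memLp_two_iff_integrable_sq hfm.stronglyMeasurable.aestronglyMeasurable).mpr i4
    have hv := ProbabilityTheory.variance_nonneg f (condExpKernel μ m ω)
    rw [ProbabilityTheory.variance_eq_sub hmem] at hv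
    simp only [Pi.pow_apply] at hv
    rw [Real.norm_eq_abs, abs_of_nonneg (sq_nonneg _)]
    linarith
  have hsm : StronglyMeasurable (μ[f|m]) := stronglyMeasurable_condExp.mono hm
  have hint : Integrable (fun ω => (μ[f|m]) ω ^ 2) μ :=
    Integrable.mono' integrable_condExp (hsm.pow 2).aestronglyMeasurable hbound
  exact (memLp_two_iff_integrable_sq hsm.aestronglyMeasurable).mpr hint

lemma aux_integral_mul_condexp (hm : m ≤ mΩ) {f h : Ω → ℝ}
    (hhsm : StronglyMeasurable[m] h) (hh : MemLp h 2 μ) (hf : MemLp f 2 μ) :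
    ∫ ω, h ω * f ω ∂μ = ∫ ω, h ω * (μ[f|m]) ω ∂μ := by
  have hfi : Integrable f μ := hf.integrable one_le_two
  have hmul : Integrable (h * f) μ := aux_integrable_mul hh hf
  calc ∫ ω, h ω * f ω ∂μ = ∫ ω, (μ[h * f|m]) ω ∂μ := (integral_condExp hm).symm
    _ = ∫ ω, h ω * (μ[f|m]) ω ∂μ :=
        integral_congr_ae (condExp_mul_of_stronglyMeasurable_left hhsm hmul hfi)

lemma aux_indep_integral (hm : m ≤ mΩ) {f h : Ω → ℝ}
    (hfm : Measurable f) (hhm : Measurable h)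
    (hf : MemLp f 2 μ) (hh : MemLp h 2 μ)
    (hci : CondIndepFun m hm f h μ) :
    ∫ ω, f ω * h ω ∂μ = ∫ ω, (μ[f|m]) ω * (μ[h|m]) ω ∂μ := by
  have hfi : Integrable f μ := hf.integrable one_le_two
  have hhi : Integrable h μ := hh.integrable one_le_two
  have hmul : Integrable (fun ω => f ω * h ω) μ := aux_integrable_mul hf hh
  refine Eq.trans (integral_condExp (μ := μ) (f := fun ω => f ω * h ω) hm).symm
    (integral_congr_ae ?_)
  have h1 := condExp_ae_eq_integral_condExpKernel hm hmul
  have h2 := condExp_ae_eq_integral_condExpKernel hm hfi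
  have h3 := condExp_ae_eq_integral_condExpKernel hm hhi
  have h4 := hfi.condExpKernel_ae (m := m)
  have h5 := hhi.condExpKernel_ae (m := m)
  have h6 : ∀ᵐ ω ∂μ, ∀ q r : ℚ,
      condExpKernel μ m ω (f ⁻¹' Set.Iic (q : ℝ) ∩ h ⁻¹' Set.Iic (r : ℝ)) =
        condExpKernel μ m ω (f ⁻¹' Set.Iic (q : ℝ)) *
          condExpKernel μ m ω (h ⁻¹' Set.Iic (r : ℝ)) := by
    apply ae_of_ae_trim hm
    rw [ae_all_iff]
    intro q
    rw [ae_all_iff]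
    intro r
    exact hci _ _ ⟨Set.Iic (q : ℝ), measurableSet_Iic, rfl⟩
      ⟨Set.Iic (r : ℝ), measurableSet_Iic, rfl⟩
  have hR : (inferInstance : MeasurableSpace ℝ)
      = .generateFrom (Set.range fun q : ℚ => Set.Iic (q : ℝ)) := by
    conv_lhs => rw [BorelSpace.measurable_eq (α := ℝ)]
    rw [Real.borel_eq_generateFrom_Iic_rat, Set.iUnion_singleton_eq_range]
  have hcomap : ∀ (f : Ω → ℝ), MeasurableSpace.comap f inferInstance
      = .generateFrom (Set.range fun q : ℚ => f ⁻¹' Set.Iic (q : ℝ)) := by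
    intro f
    rw [hR, MeasurableSpace.comap_generateFrom]
    congr 1
    ext s
    simp only [Set.mem_image, Set.mem_range, exists_exists_eq_and]
  have hpi : ∀ (f : Ω → ℝ), IsPiSystem (Set.range fun q : ℚ => f ⁻¹' Set.Iic (q : ℝ)) := by
    rintro f _ ⟨q, rfl⟩ _ ⟨r, rfl⟩ -
    refine ⟨q ⊓ r, ?_⟩
    simp only [← Set.preimage_inter, Set.Iic_inter_Iic]
    norm_cast
  filter_upwards [h1, h2, h3, h4, h5, h6] with ω e1 e2 e3 i4 i5 ind
  rw [e1, e2, e3]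
  have hIndep : IndepFun f h (condExpKernel μ m ω) := by
    refine IndepSets.indep (hfm.comap_le) (hhm.comap_le) (hpi f) (hpi h)
      (hcomap f) (hcomap h) ?_
    rintro _ _ ⟨q, rfl⟩ ⟨r, rfl⟩
    simpa using ind q r
  exact hIndep.integral_fun_mul_eq_mul_integral hfm.aestronglyMeasurable hhm.aestronglyMeasurable

lemma aux_pythagoras {B S : Ω → ℝ} (hB : MemLp B 2 μ) (hS : MemLp S 2 μ)
    (h : ∫ ω, B ω * S ω ∂μ = 0) :
    ∫ ω, (B ω - S ω) ^ 2 ∂μ = (∫ ω, B ω ^ 2 ∂μ) + ∫ ω, S ω ^ 2 ∂μ := by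
  have h1 := hB.integrable_sq
  have h2 := hS.integrable_sq
  have h3 := aux_integrable_mul hB hS
  have hpt : ∀ ω, (B ω - S ω) ^ 2 = B ω ^ 2 - 2 * (B ω * S ω) + S ω ^ 2 :=
    fun ω => by ring
  have h4 : Integrable (fun ω => B ω ^ 2 - 2 * (B ω * S ω)) μ := h1.sub (h3.const_mul 2)
  have h5 : Integrable (fun ω => 2 * (B ω * S ω)) μ := h3.const_mul 2
  simp_rw [hpt]
  rw [integral_add h4 h2, integral_sub h1 h5, integral_const_mul, h, mul_zero, sub_zero]

end Aux

theorem stmt9 {Ω : Type*} {mΩ : MeasurableSpace Ω} [StandardBorelSpace Ω]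
    (μ : Measure Ω) [IsProbabilityMeasure μ]
    {d : ℕ} (X Xa : Ω → Fin d → ℝ) (Y : Ω → ℝ)
    (hXm : Measurable X) (hXam : Measurable Xa) (hYm : Measurable Y)
    (hXa2 : ∀ j, MemLp (fun ω => Xa ω j) 2 μ) (hY2 : MemLp Y 2 μ)
    (mX : MeasurableSpace Ω) (hmXdef : mX = MeasurableSpace.comap X inferInstance)
    (hmX : mX ≤ mΩ)
    (hci : CondIndepFun mX hmX Xa Y μ)
    (Γ : Matrix (Fin d) (Fin d) ℝ)
    (hΓ : Γ = Matrix.of fun i j =>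
      ∫ ω, (Xa ω i - (μ[fun ω' => Xa ω' i | mX]) ω) *
        (Xa ω j - (μ[fun ω' => Xa ω' j | mX]) ω) ∂μ)
    (θ : Fin d → ℝ) :
    ∫ ω, (Y ω - ∑ j, θ j * Xa ω j) ^ 2 ∂μ =
      (∫ ω, (Y ω - ∑ j, θ j * (μ[fun ω' => Xa ω' j | mX]) ω) ^ 2 ∂μ) +
        θ ⬝ᵥ Γ.mulVec θ := by
  have hXaj : ∀ j, Measurable[mΩ] fun ω => Xa ω j := fun j => (measurable_pi_apply j).comp hXam
  have hg2 : ∀ j, MemLp (μ[fun ω' => Xa ω' j | mX]) 2 μ :=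
    fun j => aux_memℒp_condexp hmX (hXaj j) (hXa2 j)
  have he2 : ∀ j, MemLp (fun ω => Xa ω j - (μ[fun ω' => Xa ω' j | mX]) ω) 2 μ :=
    fun j => (hXa2 j).sub (hg2 j)
  have hM2 : MemLp (fun ω => ∑ i, θ i * (μ[fun ω' => Xa ω' i | mX]) ω) 2 μ :=
    memLp_finsetSum _ fun i _ => (hg2 i).const_mul (θ i)
  have hMsm : StronglyMeasurable[mX] (fun ω => ∑ i, θ i * (μ[fun ω' => Xa ω' i | mX]) ω) :=
    Finset.stronglyMeasurable_fun_sum _ fun i _ => stronglyMeasurable_condExp.const_mul (θ i)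
  have hB2 : MemLp (fun ω => Y ω - ∑ i, θ i * (μ[fun ω' => Xa ω' i | mX]) ω) 2 μ :=
    hY2.sub hM2
  have hS2 : MemLp (fun ω => ∑ j, θ j * (Xa ω j - (μ[fun ω' => Xa ω' j | mX]) ω)) 2 μ :=
    memLp_finsetSum _ fun j _ => (he2 j).const_mul (θ j)
  have key : ∀ j, ∫ ω, (Y ω - ∑ i, θ i * (μ[fun ω' => Xa ω' i | mX]) ω) *
      (Xa ω j - (μ[fun ω' => Xa ω' j | mX]) ω) ∂μ = 0 := by
    intro j
    have i1 : Integrable (fun ω => Xa ω j * Y ω) μ := aux_integrable_mul (hXa2 j) hY2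
    have i2 : Integrable (fun ω => (μ[fun ω' => Xa ω' j | mX]) ω * Y ω) μ :=
      aux_integrable_mul (hg2 j) hY2
    have i3 : Integrable
        (fun ω => (∑ i, θ i * (μ[fun ω' => Xa ω' i | mX]) ω) * Xa ω j) μ :=
      aux_integrable_mul hM2 (hXa2 j)
    have i4 : Integrable (fun ω => (∑ i, θ i * (μ[fun ω' => Xa ω' i | mX]) ω) *
        (μ[fun ω' => Xa ω' j | mX]) ω) μ :=
      aux_integrable_mul hM2 (hg2 j)
    have hcij : CondIndepFun mX hmX (fun ω => Xa ω j) Y μ :=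
      Kernel.IndepFun.comp hci (measurable_pi_apply j) measurable_id
    have e1 : ∫ ω, Xa ω j * Y ω ∂μ
        = ∫ ω, (μ[fun ω' => Xa ω' j | mX]) ω * (μ[Y | mX]) ω ∂μ :=
      aux_indep_integral hmX (hXaj j) hYm (hXa2 j) hY2 hcij
    have e2 : ∫ ω, (μ[fun ω' => Xa ω' j | mX]) ω * Y ω ∂μ
        = ∫ ω, (μ[fun ω' => Xa ω' j | mX]) ω * (μ[Y | mX]) ω ∂μ :=
      aux_integral_mul_condexp hmX stronglyMeasurable_condExp (hg2 j) hY2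
    have e3 : ∫ ω, (∑ i, θ i * (μ[fun ω' => Xa ω' i | mX]) ω) * Xa ω j ∂μ
        = ∫ ω, (∑ i, θ i * (μ[fun ω' => Xa ω' i | mX]) ω) *
            (μ[fun ω' => Xa ω' j | mX]) ω ∂μ :=
      aux_integral_mul_condexp hmX hMsm hM2 (hXa2 j)
    calc ∫ ω, (Y ω - ∑ i, θ i * (μ[fun ω' => Xa ω' i | mX]) ω) *
          (Xa ω j - (μ[fun ω' => Xa ω' j | mX]) ω) ∂μ
        = (∫ ω, Xa ω j * Y ω ∂μ - ∫ ω, (μ[fun ω' => Xa ω' j | mX]) ω * Y ω ∂μ)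
          - ((∫ ω, (∑ i, θ i * (μ[fun ω' => Xa ω' i | mX]) ω) * Xa ω j ∂μ)
            - ∫ ω, (∑ i, θ i * (μ[fun ω' => Xa ω' i | mX]) ω) *
                (μ[fun ω' => Xa ω' j | mX]) ω ∂μ) := by
          have i12 : Integrable (fun ω => Xa ω j * Y ω -
              (μ[fun ω' => Xa ω' j | mX]) ω * Y ω) μ := i1.sub i2
          have i34 : Integrable (fun ω => (∑ i, θ i * (μ[fun ω' => Xa ω' i | mX]) ω) * Xa ω j -
              (∑ i, θ i * (μ[fun ω' => Xa ω' i | mX]) ω) *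
                (μ[fun ω' => Xa ω' j | mX]) ω) μ := i3.sub i4
          rw [← integral_sub i1 i2, ← integral_sub i3 i4, ← integral_sub i12 i34]
          refine integral_congr_ae (Filter.Eventually.of_forall fun ω => ?_)
          ring
      _ = 0 := by rw [e1, e2, e3]; ring
  have hBS : ∫ ω, (Y ω - ∑ i, θ i * (μ[fun ω' => Xa ω' i | mX]) ω) *
      (∑ j, θ j * (Xa ω j - (μ[fun ω' => Xa ω' j | mX]) ω)) ∂μ = 0 := by
    have hpt : ∀ ω, (Y ω - ∑ i, θ i * (μ[fun ω' => Xa ω' i | mX]) ω) *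
        (∑ j, θ j * (Xa ω j - (μ[fun ω' => Xa ω' j | mX]) ω))
        = ∑ j, θ j * ((Y ω - ∑ i, θ i * (μ[fun ω' => Xa ω' i | mX]) ω) *
            (Xa ω j - (μ[fun ω' => Xa ω' j | mX]) ω)) := by
      intro ω
      rw [Finset.mul_sum]
      exact Finset.sum_congr rfl fun j _ => by ring
    simp_rw [hpt]
    rw [integral_finset_sum _
      (fun j _ => (aux_integrable_mul hB2 (he2 j)).const_mul (θ j))]
    refine Finset.sum_eq_zero fun j _ => ?_
    rw [integral_const_mul, key j, mul_zero]
  have hG : ∫ ω, (∑ j, θ j * (Xa ω j - (μ[fun ω' => Xa ω' j | mX]) ω)) ^ 2 ∂μ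
      = θ ⬝ᵥ Γ.mulVec θ := by
    subst hΓ
    have hpt : ∀ ω, (∑ j, θ j * (Xa ω j - (μ[fun ω' => Xa ω' j | mX]) ω)) ^ 2
        = ∑ i, ∑ j, (θ i * θ j) * ((Xa ω i - (μ[fun ω' => Xa ω' i | mX]) ω) *
            (Xa ω j - (μ[fun ω' => Xa ω' j | mX]) ω)) := by
      intro ω
      rw [sq, Finset.sum_mul_sum]
      exact Finset.sum_congr rfl fun i _ => Finset.sum_congr rfl fun j _ => by ring
    simp_rw [hpt]
    rw [integral_finset_sum _ (fun i _ => integrable_finset_sum _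
      (fun j _ => (aux_integrable_mul (he2 i) (he2 j)).const_mul _))]
    calc ∑ i, ∫ ω, ∑ j, (θ i * θ j) * ((Xa ω i - (μ[fun ω' => Xa ω' i | mX]) ω) *
            (Xa ω j - (μ[fun ω' => Xa ω' j | mX]) ω)) ∂μ
        = ∑ i, ∑ j, (θ i * θ j) * ∫ ω, (Xa ω i - (μ[fun ω' => Xa ω' i | mX]) ω) *
            (Xa ω j - (μ[fun ω' => Xa ω' j | mX]) ω) ∂μ := by
          refine Finset.sum_congr rfl fun i _ => ?_
          rw [integral_finset_sum _
            (fun j _ => (aux_integrable_mul (he2 i) (he2 j)).const_mul _)]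
          exact Finset.sum_congr rfl fun j _ => integral_const_mul _ _
      _ = θ ⬝ᵥ (Matrix.of fun i j =>
            ∫ ω, (Xa ω i - (μ[fun ω' => Xa ω' i | mX]) ω) *
              (Xa ω j - (μ[fun ω' => Xa ω' j | mX]) ω) ∂μ).mulVec θ := by
          simp only [dotProduct, Matrix.mulVec, Matrix.of_apply]
          refine Finset.sum_congr rfl fun i _ => ?_
          rw [Finset.mul_sum]
          exact Finset.sum_congr rfl fun j _ => by ring
  have hpt0 : ∀ ω, (Y ω - ∑ j, θ j * Xa ω j) ^ 2
      = ((Y ω - ∑ j, θ j * (μ[fun ω' => Xa ω' j | mX]) ω)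
        - ∑ j, θ j * (Xa ω j - (μ[fun ω' => Xa ω' j | mX]) ω)) ^ 2 := by
    intro ω
    have hsum : ∑ j, θ j * (Xa ω j - (μ[fun ω' => Xa ω' j | mX]) ω)
        = (∑ j, θ j * Xa ω j) - ∑ j, θ j * (μ[fun ω' => Xa ω' j | mX]) ω := by
      rw [← Finset.sum_sub_distrib]
      exact Finset.sum_congr rfl fun j _ => by ring
    rw [hsum]; ring
  simp_rw [hpt0]
  rw [aux_pythagoras hB2 hS2 hBS, hG]
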